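/- Let R be a ring, C = R[X₁,…,Xₙ] a polynomial ring over R, and A an R-algebra. If A ⊗_R C is an 𝔸^r-fibration over C for some r ≥ 0, then A is an 𝔸^r-fibration over R. -/

import Mathlib

open scoped TensorProduct

/-- `A` is an `𝔸^r`-fibration over `R`: `A` is a finitely generated flat `R`-algebra such
that the fibre `A ⊗_R k(𝔭)` is a polynomial ring in `r` variables over the residue field
`k(𝔭)` for every prime `𝔭` of `R`. -/
def IsAffineFibration (R : Type*) (A : Type*) [CommRing R] [CommRing A] [Algebra R A]
    (r : ℕ) : Prop :=
  Algebra.FiniteType R A ∧ Module.Flat R A ∧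
    ∀ (𝔭 : Ideal R) [𝔭.IsPrime],
      Nonempty ((IsLocalRing.ResidueField (Localization.AtPrime 𝔭)) ⊗[R] A
        ≃ₐ[IsLocalRing.ResidueField (Localization.AtPrime 𝔭)]
          MvPolynomial (Fin r) (IsLocalRing.ResidueField (Localization.AtPrime 𝔭)))

set_option maxHeartbeats 1000000 in
set_option synthInstance.maxHeartbeats 400000 in
/-- Cancelling base change, as an algebra equivalence:
`T ⊗[S] (S ⊗[R] A) ≃ₐ[T] T ⊗[R] A`. -/
noncomputable def AffineFib.cancelAlgEquiv (R S T A : Type*) [CommRing R] [CommRing S]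
    [CommRing T] [CommRing A] [Algebra R S] [Algebra S T] [Algebra R T] [IsScalarTower R S T]
    [Algebra R A] : T ⊗[S] (S ⊗[R] A) ≃ₐ[T] T ⊗[R] A :=
  AlgEquiv.ofLinearEquiv (TensorProduct.AlgebraTensorModule.cancelBaseChange R S T T A)
    (by
      simp only [Algebra.TensorProduct.one_def,
        TensorProduct.AlgebraTensorModule.cancelBaseChange_tmul, one_smul])
    (fun x y => by
      induction x using TensorProduct.induction_on with
      | zero => simp
      | add u v hu hv => simp only [add_mul, map_add, hu, hv]
      | tmul t z =>
        induction y using TensorProduct.induction_on with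
        | zero => simp
        | add u v hu hv => simp only [mul_add, map_add, hu, hv]
        | tmul t' z' =>
          induction z using TensorProduct.induction_on with
          | zero => simp
          | add u v hu hv =>
            simp only [TensorProduct.tmul_add, add_mul, map_add] at hu hv ⊢
            rw [hu, hv]
          | tmul c a =>
            induction z' using TensorProduct.induction_on with
            | zero => simp
            | add u v hu hv =>
              simp only [TensorProduct.tmul_add, mul_add, map_add] at hu hv ⊢
              rw [hu, hv]
            | tmul c' a' =>
              simp only [Algebra.TensorProduct.tmul_mul_tmul,
                TensorProduct.AlgebraTensorModule.cancelBaseChange_tmul]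
              rw [smul_mul_smul_comm])

set_option maxHeartbeats 1000000 in
set_option synthInstance.maxHeartbeats 400000 in
/-- Auxiliary abstract version: if `C` is a finite type `R`-algebra admitting an `R`-algebra
retraction `σ : C →ₐ[R] R`, and `C ⊗[R] A` is an `𝔸^r`-fibration over `C`, then `A` is an
`𝔸^r`-fibration over `R`. -/
theorem AffineFib.aux {R C A : Type*} [CommRing R] [CommRing C] [CommRing A]
    [Algebra R C] [Algebra R A] (σ : C →ₐ[R] R) (r : ℕ)
    (hRC : Algebra.FiniteType R C)
    (h : IsAffineFibration C (C ⊗[R] A) r) :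
    IsAffineFibration R A r := by
  obtain ⟨hft, hfl, hfib⟩ := h
  have hσι : ∀ x : R, σ (algebraMap R C x) = x := fun x => σ.commutes x
  letI : Algebra C R := σ.toRingHom.toAlgebra
  haveI : IsScalarTower R C R :=
    IsScalarTower.of_algebraMap_eq (fun x => (hσι x).symm)
  refine ⟨?_, ?_, ?_⟩
  · -- finite type
    haveI := hft
    have h2 : Algebra.FiniteType R (C ⊗[R] A) := Algebra.FiniteType.trans hRC hft
    let μ : C ⊗[R] A →ₐ[R] A :=
      Algebra.TensorProduct.lift ((Algebra.ofId R A).comp σ) (AlgHom.id R A)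
        (fun _ _ => Commute.all _ _)
    exact h2.of_surjective μ (fun a => ⟨1 ⊗ₜ a, by simp [μ]⟩)
  · -- flat
    haveI := hfl
    haveI : Module.Flat R (R ⊗[C] (C ⊗[R] A)) := Module.Flat.baseChange C R (C ⊗[R] A)
    exact Module.Flat.of_linearEquiv
      (((AffineFib.cancelAlgEquiv R C R A).trans
        (Algebra.TensorProduct.lid R A)).toLinearEquiv.symm)
  · -- fibres
    intro 𝔭 _
    set K := IsLocalRing.ResidueField (Localization.AtPrime 𝔭) with hK
    set 𝔮 : Ideal C := 𝔭.comap σ.toRingHom with h𝔮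
    haveI : 𝔮.IsPrime := Ideal.IsPrime.comap σ.toRingHom
    set k𝔮 := IsLocalRing.ResidueField (Localization.AtPrime 𝔮) with hk𝔮
    obtain ⟨e₁⟩ := hfib 𝔮
    -- make K a C-algebra via σ
    letI : Algebra C K := ((algebraMap R K).comp σ.toRingHom).toAlgebra
    letI : Module C K := Algebra.toModule
    haveI : IsScalarTower R C K := IsScalarTower.of_algebraMap_eq
      (fun x => by
        show algebraMap R K x = (algebraMap R K) (σ (algebraMap R C x))
        rw [hσι])
    -- the induced map on residue fields
    haveI : IsLocalHom (Localization.localRingHom 𝔮 𝔭 σ.toRingHom rfl) :=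
      Localization.isLocalHom_localRingHom 𝔮 𝔭 σ.toRingHom rfl
    let ψ : k𝔮 →+* K :=
      IsLocalRing.ResidueField.map (Localization.localRingHom 𝔮 𝔭 σ.toRingHom rfl)
    letI : Algebra k𝔮 K := ψ.toAlgebra
    haveI : IsScalarTower C k𝔮 K := IsScalarTower.of_algebraMap_eq (fun c => by
      show (algebraMap R K) (σ c) = ψ (algebraMap C k𝔮 c)
      rw [IsScalarTower.algebraMap_apply C (Localization.AtPrime 𝔮) k𝔮,
        IsScalarTower.algebraMap_apply R (Localization.AtPrime 𝔭) K]
      show _ = ψ (IsLocalRing.residue _ (algebraMap C (Localization.AtPrime 𝔮) c))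
      rw [show ψ (IsLocalRing.residue _ (algebraMap C (Localization.AtPrime 𝔮) c)) =
        IsLocalRing.residue _ ((Localization.localRingHom 𝔮 𝔭 σ.toRingHom rfl)
          (algebraMap C (Localization.AtPrime 𝔮) c)) from rfl,
        Localization.localRingHom_to_map, ← IsLocalRing.ResidueField.algebraMap_eq]
      rfl)
    -- assemble the chain of isomorphisms
    let E1 : K ⊗[C] (C ⊗[R] A) ≃ₐ[K] K ⊗[R] A := AffineFib.cancelAlgEquiv R C K A
    let E2 : K ⊗[k𝔮] (k𝔮 ⊗[C] (C ⊗[R] A)) ≃ₐ[K] K ⊗[C] (C ⊗[R] A) :=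
      AffineFib.cancelAlgEquiv C k𝔮 K (C ⊗[R] A)
    let E3 : K ⊗[k𝔮] (k𝔮 ⊗[C] (C ⊗[R] A)) ≃ₐ[K] K ⊗[k𝔮] (MvPolynomial (Fin r) k𝔮) :=
      Algebra.TensorProduct.congr AlgEquiv.refl e₁
    let E4 : K ⊗[k𝔮] (MvPolynomial (Fin r) k𝔮) ≃ₐ[K] MvPolynomial (Fin r) K :=
      MvPolynomial.algebraTensorAlgEquiv k𝔮 K
    exact ⟨E1.symm.trans (E2.symm.trans (E3.trans E4))⟩

/-- If `C = R[X₁,…,Xₙ]` and `A ⊗_R C` is an `𝔸^r`-fibration over `C`, then `A` is an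
`𝔸^r`-fibration over `R`. -/
theorem isAffineFibration_of_baseChange_polynomial {R A : Type*} [CommRing R]
    [CommRing A] [Algebra R A] (n r : ℕ)
    (h : IsAffineFibration (MvPolynomial (Fin n) R)
      ((MvPolynomial (Fin n) R) ⊗[R] A) r) :
    IsAffineFibration R A r :=
  AffineFib.aux (MvPolynomial.aeval 0) r (inferInstance) h
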